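/- (Lerch's identity) For every real number x with 0 < x ≤ 1, the derivative in s of the Hurwitz zeta function at s = 0 satisfies ζ'(0, x) = log Γ(x) − (1/2) log(2π), where Γ is the Gamma function. -/

import Mathlib

set_option maxHeartbeats 1000000

open Complex Filter Topology Finset

noncomputable section
namespace LerchAux

local notation "γ" => Real.eulerMascheroniConstant


lemma exp_cub (z : ℂ) : ‖Complex.exp z - 1 - z‖ ≤ 3 * ‖z‖^2 * Real.exp ‖z‖ := by
  have h1 : (1:ℝ) ≤ Real.exp ‖z‖ := Real.one_le_exp (norm_nonneg _)
  rcases le_or_gt ‖z‖ 1 with h | h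
  · have := Complex.norm_exp_sub_one_sub_id_le (x := z) h
    nlinarith [norm_nonneg z, sq_nonneg ‖z‖]
  · have h2 : ‖Complex.exp z - 1 - z‖ ≤ Real.exp z.re + 1 + ‖z‖ := by
      calc ‖Complex.exp z - 1 - z‖ ≤ ‖Complex.exp z - 1‖ + ‖z‖ := norm_sub_le _ _
        _ ≤ ‖Complex.exp z‖ + ‖(1:ℂ)‖ + ‖z‖ := by gcongr; exact norm_sub_le _ _
        _ = Real.exp z.re + 1 + ‖z‖ := by
              rw [Complex.norm_exp, norm_one]
    have h3 : Real.exp z.re ≤ Real.exp ‖z‖ := Real.exp_le_exp.mpr (Complex.re_le_norm z)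
    have hz2 : 1 ≤ ‖z‖^2 := by nlinarith
    have hE : (0:ℝ) ≤ Real.exp ‖z‖ := by linarith
    have k1 : Real.exp z.re ≤ ‖z‖^2 * Real.exp ‖z‖ := by nlinarith
    have k2 : (1:ℝ) ≤ ‖z‖^2 * Real.exp ‖z‖ := by nlinarith
    have k3 : ‖z‖ ≤ ‖z‖^2 * Real.exp ‖z‖ := by nlinarith
    linarith

def qz : ℂ → ℂ := fun s => if s = 0 then 1 else s * riemannZeta (s + 1)

lemma qz_of_ne {s : ℂ} (hs : s ≠ 0) : qz s = s * riemannZeta (s + 1) := if_neg hs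

lemma hasDerivAt_qz : HasDerivAt qz ((Real.eulerMascheroniConstant : ℂ)) 0 := by
  rw [hasDerivAt_iff_tendsto_slope]
  have h0 : Tendsto (fun s : ℂ => s + 1) (𝓝[≠] 0) (𝓝[≠] 1) := by
    apply tendsto_nhdsWithin_of_tendsto_nhds_of_eventually_within
    · have : Tendsto (fun s : ℂ => s + 1) (𝓝 0) (𝓝 1) := by
        simpa [Pi.add_def] using (continuous_id'.add (continuous_const (y := (1:ℂ)))).tendsto 0
      exact this.mono_left nhdsWithin_le_nhds
    · filter_upwards [self_mem_nhdsWithin] with s hs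
      simpa [Set.mem_compl_iff, add_eq_right] using hs
  have h1 := tendsto_riemannZeta_sub_one_div.comp h0
  apply h1.congr'
  filter_upwards [self_mem_nhdsWithin] with s hs
  have hs' : s ≠ 0 := hs
  simp only [Function.comp_apply, slope_def_field, qz, if_neg hs', if_true]
  rw [add_sub_cancel_right]
  field_simp
  ring

lemma differentiableAt_qz (s : ℂ) : DifferentiableAt ℂ qz s := by
  rcases eq_or_ne s 0 with rfl | hs
  · exact hasDerivAt_qz.differentiableAt
  · have : DifferentiableAt ℂ (fun s : ℂ => s * riemannZeta (s + 1)) s := by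
      have hne : s + 1 ≠ 1 := fun h => hs (by linear_combination h)
      exact (differentiableAt_id).mul ((differentiableAt_riemannZeta hne).comp s
        ((differentiableAt_id).add (differentiableAt_const 1)))
    refine this.congr_of_eventuallyEq ?_
    filter_upwards [isOpen_ne.mem_nhds hs] with w hw
    exact if_neg hw





lemma lambda0_zero : completedRiemannZeta₀ 0 = (γ - Complex.log (4 * Real.pi)) / 2 + 1 := by
  have := completedRiemannZeta₀_one_sub 1
  rw [sub_self] at this
  rw [this, completedRiemannZeta₀_one]

lemma hasDerivAt_riemannZeta_zero :
    HasDerivAt riemannZeta (-(Real.log (2 * Real.pi)) / 2 : ℂ) 0 := by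
  set Ψ : ℂ → ℂ := fun s => (s * completedRiemannZeta₀ s - 1 - s / (1 - s)) *
    ((Real.pi : ℂ) ^ (s / 2) / (2 * Complex.Gamma (s / 2 + 1))) with hΨdef
  -- derivative of the first factor
  have h1 : HasDerivAt (fun s : ℂ => s * completedRiemannZeta₀ s) (completedRiemannZeta₀ 0) 0 := by
    have := (hasDerivAt_id (0 : ℂ)).mul (differentiable_completedZeta₀ 0).hasDerivAt
    simpa [Pi.mul_def] using this
  have h2 : HasDerivAt (fun s : ℂ => s / (1 - s)) 1 0 := by
    have hd : HasDerivAt (fun s : ℂ => 1 - s) (-1) 0 := by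
      simpa using (hasDerivAt_id (0 : ℂ)).const_sub 1
    have := (hasDerivAt_id (0 : ℂ)).div hd (by norm_num)
    simpa [Pi.div_def] using this
  have hA : HasDerivAt (fun s : ℂ => s * completedRiemannZeta₀ s - 1 - s / (1 - s))
      (completedRiemannZeta₀ 0 - 1) 0 := by
    simpa [Pi.sub_def] using (h1.sub_const 1).sub h2
  -- derivative of the second factor
  have hπ : HasDerivAt (fun s : ℂ => (Real.pi : ℂ) ^ (s / 2)) ((Real.log Real.pi : ℂ) / 2) 0 := by
    have := ((hasDerivAt_id (0 : ℂ)).div_const 2).const_cpow (c := (Real.pi : ℂ))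
      (Or.inl (by exact_mod_cast Real.pi_pos.ne'))
    simp only [zero_div, Complex.cpow_zero, one_mul, id_eq] at this
    rw [← Complex.ofReal_log Real.pi_pos.le] at this
    simpa [div_eq_mul_inv, mul_comm] using this
  have hu : HasDerivAt (fun s : ℂ => s / 2 + 1) (1 / 2) 0 := by
    simpa using ((hasDerivAt_id (0 : ℂ)).div_const 2).add_const 1
  have hΓ : HasDerivAt (fun s : ℂ => 2 * Complex.Gamma (s / 2 + 1)) (-(γ : ℂ)) 0 := by
    have hg : HasDerivAt Complex.Gamma (-(γ : ℂ)) ((fun s : ℂ => s / 2 + 1) 0) := by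
      simpa using Complex.hasDerivAt_Gamma_one
    have := (hg.comp 0 hu).const_mul (2 : ℂ)
    convert this using 1
    all_goals first | rfl | ring
  have hB : HasDerivAt (fun s : ℂ => (Real.pi : ℂ) ^ (s / 2) / (2 * Complex.Gamma (s / 2 + 1)))
      (((Real.log Real.pi : ℂ) + γ) / 4) 0 := by
    have := hπ.div hΓ (by simp [Complex.Gamma_one])
    convert this using 1 <;> try rfl
    simp [Complex.Gamma_one]
    norm_num
  have hΨ : HasDerivAt Ψ ((completedRiemannZeta₀ 0 - 1) * (1 / 2) +
      (-1) * (((Real.log Real.pi : ℂ) + γ) / 4)) 0 := by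
    have := hA.mul hB
    convert this using 1 <;> try rfl
    simp [Complex.Gamma_one]
  -- riemannZeta2 agrees with Ψ near 0
  have heq : riemannZeta =ᶠ[𝓝 (0 : ℂ)] Ψ := by
    filter_upwards [Metric.ball_mem_nhds (0 : ℂ) one_pos] with s hs
    rw [Metric.mem_ball, dist_zero_right] at hs
    rcases eq_or_ne s 0 with rfl | hs0
    · rw [riemannZeta_zero, hΨdef]
      simp [Complex.Gamma_one]
      norm_num
    · have hs1 : (1 : ℂ) - s ≠ 0 := by
        intro h
        have : s = 1 := by linear_combination -h
        rw [this] at hs; simp at hs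
      have hΓs : Complex.Gamma (s / 2) ≠ 0 := by
        apply Complex.Gamma_ne_zero
        intro m h
        rcases Nat.eq_zero_or_pos m with rfl | hm
        · simp at h; exact hs0 (by simpa using h)
        · have hsm : s = -2 * m := by linear_combination 2 * h
          rw [hsm] at hs
          simp only [norm_mul, norm_neg, Complex.norm_natCast] at hs
          have h2 : ‖(2:ℂ)‖ = 2 := by simp
          rw [h2] at hs
          have : (1 : ℝ) ≤ m := by exact_mod_cast hm
          linarith
      have hπne : ((Real.pi : ℂ)) ^ (s / 2) ≠ 0 := by
        rw [Complex.cpow_def_of_ne_zero (by exact_mod_cast Real.pi_pos.ne')]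
        exact Complex.exp_ne_zero _
      rw [riemannZeta_def_of_ne_zero hs0, completedRiemannZeta_eq, Complex.Gammaℝ_def, hΨdef]
      dsimp only
      rw [Complex.Gamma_add_one _ (div_ne_zero hs0 two_ne_zero)]
      rw [show -s / 2 = -(s / 2) by ring, Complex.cpow_neg]
      field_simp
  have hval : (completedRiemannZeta₀ 0 - 1) * (1 / 2) +
      (-1 : ℂ) * (((Real.log Real.pi : ℂ) + γ) / 4) = -(Real.log (2 * Real.pi)) / 2 := by
    rw [lambda0_zero]
    rw [show ((4 : ℂ) * Real.pi) = ((4 * Real.pi : ℝ) : ℂ) by push_cast; ring,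
      ← Complex.ofReal_log (by positivity)]
    have hlog : Real.log (4 * Real.pi) + Real.log Real.pi = 2 * Real.log (2 * Real.pi) := by
      rw [← Real.log_mul (by positivity) (by positivity),
        show (4 * Real.pi) * Real.pi = (2 * Real.pi) ^ 2 by ring, Real.log_pow]
      push_cast
      ring
    have hlogC : ((Real.log (4 * Real.pi) : ℂ)) + (Real.log Real.pi : ℂ)
        = 2 * (Real.log (2 * Real.pi) : ℂ) := by exact_mod_cast hlog
    linear_combination (-1 / 4 : ℂ) * hlogC
  exact hval ▸ hΨ.congr_of_eventuallyEq heq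




def fterm (x : ℝ) (n : ℕ) (s : ℂ) : ℂ :=
  (((n : ℝ) + x : ℝ) : ℂ) ^ (-s) - (((n : ℝ) + 1 : ℝ) : ℂ) ^ (-s)
    + ((x : ℂ) - 1) * (s * ((((n : ℝ) + 1 : ℝ) : ℂ)) ^ (-(s + 1)))

def Uset : Set ℂ := {s : ℂ | -(1/2 : ℝ) < s.re} ∩ Metric.ball 0 4

lemma Uset_open : IsOpen Uset :=
  ((isOpen_lt continuous_const Complex.continuous_re)).inter Metric.isOpen_ball

lemma Uset_preconnected : IsPreconnected Uset := by
  refine Convex.isPreconnected ?_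
  exact (convex_halfSpace_re_gt _).inter (convex_ball 0 4)

lemma zero_mem_Uset : (0 : ℂ) ∈ Uset := by
  refine ⟨?_, ?_⟩
  · show -(1/2 : ℝ) < (0 : ℂ).re
    norm_num
  · simp

lemma two_mem_Uset : (2 : ℂ) ∈ Uset := by
  refine ⟨?_, ?_⟩
  · show -(1/2 : ℝ) < (2 : ℂ).re
    norm_num
  · rw [Metric.mem_ball, dist_zero_right]
    norm_num

lemma fterm_differentiable (x : ℝ) (hx0 : 0 < x) (n : ℕ) :
    Differentiable ℂ (fterm x n) := by
  have hp : ((((n : ℝ) + x : ℝ)) : ℂ) ≠ 0 := by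
    exact_mod_cast (by positivity : (0:ℝ) < (n : ℝ) + x).ne'
  have hq : ((((n : ℝ) + 1 : ℝ)) : ℂ) ≠ 0 := by
    exact_mod_cast (by positivity : (0:ℝ) < (n : ℝ) + 1).ne'
  refine ((differentiable_neg.const_cpow (Or.inl hp)).sub
    (differentiable_neg.const_cpow (Or.inl hq))).add ?_
  exact (differentiable_id.mul (((differentiable_id.add_const 1).neg).const_cpow
    (Or.inl hq))).const_mul _

lemma hasDerivAt_fterm (x : ℝ) (hx0 : 0 < x) (n : ℕ) :
    HasDerivAt (fterm x n)
      ((Real.log ((n : ℝ) + 1) - Real.log ((n : ℝ) + x) + (x - 1) / ((n : ℝ) + 1) : ℝ) : ℂ) 0 := by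
  have hp : (0:ℝ) < (n : ℝ) + x := by positivity
  have hq : (0:ℝ) < (n : ℝ) + 1 := by positivity
  have hpc : ((((n : ℝ) + x : ℝ)) : ℂ) ≠ 0 := by exact_mod_cast hp.ne'
  have hqc : ((((n : ℝ) + 1 : ℝ)) : ℂ) ≠ 0 := by exact_mod_cast hq.ne'
  have hd1 : HasDerivAt (fun s : ℂ => ((((n : ℝ) + x : ℝ)) : ℂ) ^ (-s))
      (-((Real.log ((n : ℝ) + x) : ℝ) : ℂ)) 0 := by
    have := (hasDerivAt_id (0:ℂ)).neg.const_cpow (c := ((((n : ℝ) + x : ℝ)) : ℂ)) (Or.inl hpc)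
    simp only [id_eq, Pi.neg_apply, neg_zero, Complex.cpow_zero, one_mul, mul_neg, mul_one] at this
    rwa [← Complex.ofReal_log hp.le] at this
  have hd2 : HasDerivAt (fun s : ℂ => ((((n : ℝ) + 1 : ℝ)) : ℂ) ^ (-s))
      (-((Real.log ((n : ℝ) + 1) : ℝ) : ℂ)) 0 := by
    have := (hasDerivAt_id (0:ℂ)).neg.const_cpow (c := ((((n : ℝ) + 1 : ℝ)) : ℂ)) (Or.inl hqc)
    simp only [id_eq, Pi.neg_apply, neg_zero, Complex.cpow_zero, one_mul, mul_neg, mul_one] at this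
    rwa [← Complex.ofReal_log hq.le] at this
  have hd3 : HasDerivAt (fun s : ℂ => s * ((((n : ℝ) + 1 : ℝ)) : ℂ) ^ (-(s + 1)))
      (((((n : ℝ) + 1 : ℝ)) : ℂ)⁻¹) 0 := by
    have hinner : HasDerivAt (fun s : ℂ => ((((n : ℝ) + 1 : ℝ)) : ℂ) ^ (-(s + 1)))
        (((((n : ℝ) + 1 : ℝ)) : ℂ) ^ (-(0 + 1 : ℂ)) * Complex.log ((((n : ℝ) + 1 : ℝ)) : ℂ) * (-1)) 0 :=
      (((hasDerivAt_id (0:ℂ)).add_const 1).neg).const_cpow (Or.inl hqc)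
    have := (hasDerivAt_id (0:ℂ)).mul hinner
    simp only [id_eq, zero_add, mul_neg, mul_one, zero_mul, add_zero, one_mul] at this
    simpa [Complex.cpow_neg_one, Pi.mul_def] using this
  have := (hd1.sub hd2).add ((hd3.const_mul ((x : ℂ) - 1)))
  convert this using 1 <;> try rfl
  push_cast
  ring

def Cbound (x : ℝ) : ℝ := 52 * x⁻¹ ^ 2 * Real.exp (4 * x⁻¹)

lemma fterm_bound (x : ℝ) (hx0 : 0 < x) (hx1 : x ≤ 1) (n : ℕ) (s : ℂ) (hs : s ∈ Uset) :
    ‖fterm x n s‖ ≤ Cbound x * ((n : ℝ) + 1) ^ (-(3/2) : ℝ) := by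
  obtain ⟨hre, hball⟩ := hs
  rw [Metric.mem_ball, dist_zero_right] at hball
  have hs4 : ‖s‖ ≤ 4 := hball.le
  have hsnn : 0 ≤ ‖s‖ := norm_nonneg s
  have hre' : -s.re ≤ 1/2 := by
    have : -(1/2 : ℝ) < s.re := hre
    linarith
  set p : ℝ := (n : ℝ) + x with hpdef
  set q : ℝ := (n : ℝ) + 1 with hqdef
  have hn0 : (0:ℝ) ≤ (n : ℝ) := Nat.cast_nonneg n
  have hp : 0 < p := by positivity
  have hq : 0 < q := by positivity
  have hq1 : (1:ℝ) ≤ q := by rw [hqdef]; linarith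
  have hpq : p ≤ q := by rw [hpdef, hqdef]; linarith
  set c : ℝ := x⁻¹ with hcdef
  have hc0 : 0 < c := by positivity
  have hc1 : (1:ℝ) ≤ c := by
    rw [hcdef]
    exact (one_le_inv₀ hx0).mpr hx1
  set b : ℝ := Real.log q - Real.log p with hbdef
  set t : ℝ := (1 - x) / p with htdef
  have ht0 : 0 ≤ t := by
    apply div_nonneg _ hp.le
    linarith
  have hb0 : 0 ≤ b := by
    rw [hbdef, sub_nonneg]
    exact Real.log_le_log hp hpq
  have hblog : b = Real.log (q / p) := by rw [hbdef, Real.log_div hq.ne' hp.ne']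
  have hbt : b ≤ t := by
    rw [hblog, htdef]
    have h1 := Real.log_le_sub_one_of_pos (div_pos hq hp)
    have h2 : q / p - 1 = (1 - x) / p := by
      rw [div_sub_one hp.ne']
      congr 1
      rw [hpdef, hqdef]; ring
    linarith
  have hblow : (1 - x) / q ≤ b := by
    rw [hblog]
    have h1 := Real.one_sub_inv_le_log_of_pos (div_pos hq hp)
    have h2 : 1 - (q / p)⁻¹ = (1 - x) / q := by
      rw [inv_div, one_sub_div hq.ne']
      congr 1
      rw [hpdef, hqdef]; ring
    linarith
  have htc : t ≤ c / q := by
    rw [htdef, hcdef, div_le_div_iff₀ hp hq, inv_mul_eq_div, le_div_iff₀ hx0]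
    nlinarith [mul_nonneg hn0 (by nlinarith [sq_nonneg (1 - x)] : (0:ℝ) ≤ 1 - x + x^2)]
  have hbc : b ≤ c / q := hbt.trans htc
  have hcq0 : 0 ≤ c / q := by positivity
  set w : ℝ := b - (1 - x) / q with hwdef
  have hw0 : 0 ≤ w := by rw [hwdef]; linarith
  have hwt : w ≤ t ^ 2 := by
    have h3 : t - (1 - x) / q ≤ t ^ 2 := by
      have e : t - (1 - x) / q = (1 - x) ^ 2 / (p * q) := by
        rw [htdef, div_sub_div _ _ hp.ne' hq.ne']
        congr 1
        rw [hpdef, hqdef]; ring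
      have e2 : t ^ 2 = (1 - x) ^ 2 / (p * p) := by
        rw [htdef, div_pow]; congr 1; ring
      rw [e, e2]
      exact div_le_div_of_nonneg_left (sq_nonneg _) (by positivity)
        (by nlinarith)
    rw [hwdef]; linarith
  -- exponential form
  have hpc : ((p : ℝ) : ℂ) ≠ 0 := by exact_mod_cast hp.ne'
  have hqc : ((q : ℝ) : ℂ) ≠ 0 := by exact_mod_cast hq.ne'
  have e1 : ((p : ℝ) : ℂ) ^ (-s) = Complex.exp (-s * ((Real.log p : ℝ) : ℂ)) := by
    rw [Complex.cpow_def_of_ne_zero hpc, ← Complex.ofReal_log hp.le, mul_comm]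
  have e2 : ((q : ℝ) : ℂ) ^ (-s) = Complex.exp (-s * ((Real.log q : ℝ) : ℂ)) := by
    rw [Complex.cpow_def_of_ne_zero hqc, ← Complex.ofReal_log hq.le, mul_comm]
  have e3 : ((q : ℝ) : ℂ) ^ (-(s+1)) = Complex.exp (-(s+1) * ((Real.log q : ℝ) : ℂ)) := by
    rw [Complex.cpow_def_of_ne_zero hqc, ← Complex.ofReal_log hq.le, mul_comm]
  have e4 : Complex.exp (-(s+1) * ((Real.log q : ℝ) : ℂ))
      = Complex.exp (-s * ((Real.log q : ℝ) : ℂ)) * ((q⁻¹ : ℝ) : ℂ) := by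
    rw [show -(s+1) * ((Real.log q : ℝ) : ℂ)
        = -s * ((Real.log q : ℝ) : ℂ) + (-((Real.log q : ℝ) : ℂ)) by ring, Complex.exp_add]
    congr 1
    rw [← Complex.ofReal_neg, ← Complex.ofReal_exp, Real.exp_neg, Real.exp_log hq]
  have key : fterm x n s = Complex.exp (-s * ((Real.log q : ℝ) : ℂ)) *
      ((Complex.exp (-s * ((-b : ℝ) : ℂ)) - 1) + s * (((x - 1)/q : ℝ) : ℂ)) := by
    simp only [fterm]
    rw [← hpdef, ← hqdef, e1, e2, e3, e4]
    rw [show ((Real.log p : ℝ) : ℂ) = ((Real.log q : ℝ) : ℂ) + ((-b : ℝ) : ℂ) by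
      push_cast [hbdef]; ring]
    rw [show -s * (((Real.log q : ℝ) : ℂ) + ((-b : ℝ) : ℂ))
        = -s * ((Real.log q : ℝ) : ℂ) + -s * ((-b : ℝ) : ℂ) by ring, Complex.exp_add]
    push_cast
    ring
  -- norms
  have hnorm1 : ‖Complex.exp (-s * ((Real.log q : ℝ) : ℂ))‖ ≤ q ^ ((1:ℝ)/2) := by
    rw [Complex.norm_exp]
    have hre2 : (-s * ((Real.log q : ℝ) : ℂ)).re = -s.re * Real.log q := by
      simp [Complex.mul_re]
    rw [hre2, Real.rpow_def_of_pos hq]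
    apply Real.exp_le_exp.mpr
    have hLq : 0 ≤ Real.log q := Real.log_nonneg hq1
    calc -s.re * Real.log q ≤ (1/2) * Real.log q := mul_le_mul_of_nonneg_right hre' hLq
      _ = Real.log q * (1/2) := by ring
  set z : ℂ := -s * ((-b : ℝ) : ℂ) with hzdef
  have hza : ‖z‖ ≤ 4 * (c / q) := by
    rw [hzdef, norm_mul, norm_neg, Complex.norm_real, Real.norm_eq_abs, abs_neg,
      _root_.abs_of_nonneg hb0]
    exact mul_le_mul hs4 hbc hb0 (by norm_num)
  have hza' : ‖z‖ ≤ 4 * c := by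
    have : c / q ≤ c := div_le_self hc0.le hq1
    linarith
  have hinner : ‖(Complex.exp z - 1) + s * (((x - 1)/q : ℝ) : ℂ)‖
      ≤ 52 * c^2 * Real.exp (4*c) / q^2 := by
    have hsplit : (Complex.exp z - 1) + s * (((x - 1)/q : ℝ) : ℂ)
        = (Complex.exp z - 1 - z) + (z + s * (((x - 1)/q : ℝ) : ℂ)) := by ring
    have hsecond : z + s * (((x - 1)/q : ℝ) : ℂ) = s * ((w : ℝ) : ℂ) := by
      rw [hzdef, hwdef]
      push_cast
      ring
    have h2nd : ‖z + s * (((x - 1)/q : ℝ) : ℂ)‖ ≤ 4 * (c/q)^2 := by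
      rw [hsecond, norm_mul, Complex.norm_real, Real.norm_eq_abs, _root_.abs_of_nonneg hw0]
      have hwc : w ≤ (c/q)^2 := by
        apply hwt.trans
        apply pow_le_pow_left₀ ht0 htc
      calc ‖s‖ * w ≤ 4 * w := mul_le_mul_of_nonneg_right hs4 hw0
        _ ≤ 4 * (c/q)^2 := by linarith
    have h1st : ‖Complex.exp z - 1 - z‖ ≤ 48 * c^2 * Real.exp (4*c) / q^2 := by
      have := exp_cub z
      have hz2 : ‖z‖^2 ≤ (4 * (c/q))^2 := by
        apply pow_le_pow_left₀ (norm_nonneg z) hza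
      have hexp : Real.exp ‖z‖ ≤ Real.exp (4*c) := Real.exp_le_exp.mpr hza'
      have hexp0 : (0:ℝ) < Real.exp ‖z‖ := Real.exp_pos _
      calc ‖Complex.exp z - 1 - z‖ ≤ 3 * ‖z‖^2 * Real.exp ‖z‖ := this
        _ ≤ 3 * (4 * (c/q))^2 * Real.exp (4*c) := by
            apply mul_le_mul _ hexp hexp0.le (by positivity)
            linarith [hz2]
        _ = 48 * c^2 * Real.exp (4*c) / q^2 := by
            field_simp
            ring
    have hexp1 : (1:ℝ) ≤ Real.exp (4*c) := Real.one_le_exp (by positivity)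
    calc ‖(Complex.exp z - 1) + s * (((x - 1)/q : ℝ) : ℂ)‖
        ≤ ‖Complex.exp z - 1 - z‖ + ‖z + s * (((x - 1)/q : ℝ) : ℂ)‖ := by
          rw [hsplit]; exact norm_add_le _ _
      _ ≤ 48 * c^2 * Real.exp (4*c) / q^2 + 4 * (c/q)^2 := add_le_add h1st h2nd
      _ ≤ 52 * c^2 * Real.exp (4*c) / q^2 := by
          rw [show (4:ℝ) * (c/q)^2 = 4*c^2/q^2 by rw [div_pow]; ring, ← add_div]
          gcongr
          nlinarith [hexp1, sq_nonneg c]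
  have hq32 : q ^ ((1:ℝ)/2) * (52 * c^2 * Real.exp (4*c) / q^2)
      = Cbound x * q ^ (-(3/2) : ℝ) := by
    have hqr : (q : ℝ)^(2:ℕ) = q ^ ((2:ℝ)) := by
      rw [← Real.rpow_natCast q 2]
      norm_num
    rw [Cbound, ← hcdef]
    rw [show q ^ ((1:ℝ)/2) * (52 * c^2 * Real.exp (4*c) / q^2)
        = (52 * c^2 * Real.exp (4*c)) * (q ^ ((1:ℝ)/2) / q^(2:ℕ)) by ring]
    congr 1
    rw [hqr, ← Real.rpow_sub hq]
    norm_num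
  calc ‖fterm x n s‖
      = ‖Complex.exp (-s * ((Real.log q : ℝ) : ℂ))‖ *
        ‖(Complex.exp z - 1) + s * (((x - 1)/q : ℝ) : ℂ)‖ := by rw [key, norm_mul]
    _ ≤ q ^ ((1:ℝ)/2) * (52 * c^2 * Real.exp (4*c) / q^2) := by
        apply mul_le_mul hnorm1 hinner (norm_nonneg _) (by positivity)
    _ = Cbound x * q ^ (-(3/2) : ℝ) := hq32
    _ = Cbound x * ((n : ℝ) + 1) ^ (-(3/2) : ℝ) := by rw [hqdef]


lemma summable_bound (x : ℝ) :
    Summable (fun n : ℕ => Cbound x * ((n:ℝ)+1) ^ (-(3/2) : ℝ)) := by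
  apply Summable.mul_left
  have h : Summable (fun n : ℕ => (n:ℝ) ^ (-(3/2) : ℝ)) :=
    Real.summable_nat_rpow.mpr (by norm_num)
  have h2 := (summable_nat_add_iff 1).mpr h
  refine h2.congr fun n => ?_
  push_cast
  ring_nf

open HurwitzZeta in
lemma hasSum_fterm (x : ℝ) (hx0 : 0 < x) (hx1 : x ≤ 1) {s : ℂ} (hs : 1 < s.re) :
    HasSum (fun n => fterm x n s)
      ((hurwitzZeta (x : ℝ) s - riemannZeta s) + ((x:ℂ) - 1) * qz s) := by
  have hs0 : s ≠ 0 := by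
    rintro rfl
    simp at hs
    norm_num at hs
  have h1 : HasSum (fun n : ℕ => 1 / ((n : ℂ) + (x:ℂ)) ^ s) (hurwitzZeta (x : ℝ) s) :=
    hasSum_hurwitzZeta_of_one_lt_re ⟨hx0.le, hx1⟩ hs
  have h1' : HasSum (fun n : ℕ => (((n:ℝ) + x : ℝ) : ℂ) ^ (-s)) (hurwitzZeta (x:ℝ) s) := by
    have hfeq : (fun n : ℕ => (((n:ℝ) + x : ℝ) : ℂ) ^ (-s))
        = (fun n : ℕ => 1 / ((n : ℂ) + (x:ℂ)) ^ s) := by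
      funext n
      rw [Complex.cpow_neg, one_div]
      norm_cast
    rw [hfeq]
    exact h1
  have hzsum : ∀ {w : ℂ}, 1 < w.re → HasSum (fun n : ℕ => 1/((n:ℂ)+1)^w) (riemannZeta w) := by
    intro w hw
    have h0 : Summable (fun n : ℕ => 1 / ((n:ℂ)) ^ w) := Complex.summable_one_div_nat_cpow.mpr hw
    have h2 := (summable_nat_add_iff 1).mpr h0
    have h2' : Summable (fun n : ℕ => 1 / ((n:ℂ)+1) ^ w) := by
      refine h2.congr fun n => ?_
      push_cast
      ring_nf
    rw [zeta_eq_tsum_one_div_nat_add_one_cpow hw]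
    exact h2'.hasSum
  have h2' : HasSum (fun n : ℕ => (((n:ℝ) + 1 : ℝ) : ℂ) ^ (-s)) (riemannZeta s) := by
    have hfeq : (fun n : ℕ => (((n:ℝ) + 1 : ℝ) : ℂ) ^ (-s))
        = (fun n : ℕ => 1 / ((n : ℂ) + 1) ^ s) := by
      funext n
      rw [Complex.cpow_neg, one_div]
      norm_cast
    rw [hfeq]
    exact hzsum hs
  have hs1 : 1 < (s+1).re := by
    rw [Complex.add_re, Complex.one_re]
    linarith
  have h3 : HasSum (fun n : ℕ => ((x:ℂ) - 1) * (s * (((n:ℝ) + 1 : ℝ) : ℂ) ^ (-(s+1))))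
      (((x:ℂ) - 1) * qz s) := by
    have hb : HasSum (fun n : ℕ => (((n:ℝ) + 1 : ℝ) : ℂ) ^ (-(s+1))) (riemannZeta (s+1)) := by
      have hfeq : (fun n : ℕ => (((n:ℝ) + 1 : ℝ) : ℂ) ^ (-(s+1)))
          = (fun n : ℕ => 1 / ((n : ℂ) + 1) ^ (s+1)) := by
        funext n
        rw [Complex.cpow_neg, one_div]
        norm_cast
      rw [hfeq]
      exact hzsum hs1
    have := (hb.mul_left s).mul_left ((x:ℂ) - 1)
    rwa [qz_of_ne hs0]
  exact (h1'.sub h2').add h3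

lemma real_partial_tendsto (x : ℝ) (hx0 : 0 < x) (hx1 : x ≤ 1) :
    Tendsto (fun N : ℕ => ∑ n ∈ range N,
      (Real.log ((n:ℝ)+1) - Real.log ((n:ℝ)+x) + (x - 1)/((n:ℝ)+1)))
      atTop (𝓝 (Real.log (Real.Gamma x) + (x-1) * γ)) := by
  have hG : 0 < Real.Gamma x := Real.Gamma_pos_of_pos hx0
  have hE : Tendsto (fun N : ℕ => Real.log (Real.GammaSeq x N)
      + (x-1) * ((harmonic N : ℝ) - Real.log N) + (Real.log ((x + N)/N)))
      atTop (𝓝 (Real.log (Real.Gamma x) + (x-1)*γ + 0)) := by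
    refine Tendsto.add (Tendsto.add ?_ ?_) ?_
    · exact (Real.continuousAt_log hG.ne').tendsto.comp (Real.GammaSeq_tendsto_Gamma x)
    · exact Real.tendsto_harmonic_sub_log.const_mul (x-1)
    · have h1 : Tendsto (fun N : ℕ => (x + N)/N) atTop (𝓝 1) := by
        have heq : (fun N : ℕ => (x + N)/N) =ᶠ[atTop] (fun N : ℕ => x / N + 1) := by
          filter_upwards [eventually_ne_atTop 0] with N hN
          have : ((N:ℝ)) ≠ 0 := Nat.cast_ne_zero.mpr hN
          field_simp
        rw [tendsto_congr' heq]
        have := (tendsto_const_div_atTop_nhds_zero_nat x).add (tendsto_const_nhds (x := (1:ℝ)))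
        simpa using this
      have := (Real.continuousAt_log one_ne_zero).tendsto.comp h1
      simpa [Function.comp_def] using this
  rw [show Real.log (Real.Gamma x) + (x-1)*γ
      = Real.log (Real.Gamma x) + (x-1)*γ + 0 by ring]
  apply hE.congr'
  filter_upwards [eventually_ge_atTop 1] with N hN
  have hNpos : (0:ℝ) < N := by exact_mod_cast hN
  have hfacpos : (0:ℝ) < (N.factorial : ℝ) := by exact_mod_cast N.factorial_pos
  have hGSlog : Real.log (Real.GammaSeq x N) = x * Real.log N + Real.log (N.factorial : ℝ)
      - (∑ j ∈ range (N+1), Real.log (x + j)) := by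
    rw [Real.GammaSeq, Real.log_div (by positivity) ?hprod, Real.log_mul (by positivity)
      hfacpos.ne', Real.log_rpow hNpos, Real.log_prod (fun j _ => by positivity)]
    case hprod =>
      apply Finset.prod_ne_zero_iff.mpr
      intro j _
      positivity
  have hsum1 : ∑ n ∈ range N, Real.log ((n:ℝ)+1) = Real.log (N.factorial : ℝ) := by
    rw [← Real.log_prod (fun i _ => by positivity)]
    congr 1
    rw [show ((N.factorial : ℝ)) = ((N.factorial : ℕ) : ℝ) by norm_cast]
    rw [← Finset.prod_range_add_one_eq_factorial N]
    push_cast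
    rfl
  have hsum2 : ∑ n ∈ range N, Real.log ((n:ℝ)+x) = ∑ j ∈ range N, Real.log (x + (j:ℝ)) :=
    Finset.sum_congr rfl fun i _ => by rw [add_comm]
  have hsum3 : ∑ n ∈ range N, (x-1)/((n:ℝ)+1) = (x-1) * (harmonic N : ℝ) := by
    rw [show ((harmonic N : ℚ) : ℝ) = ∑ i ∈ range N, ((i:ℝ)+1)⁻¹ by
      rw [harmonic]; push_cast; rfl]
    rw [Finset.mul_sum]
    exact Finset.sum_congr rfl fun i _ => by rw [div_eq_mul_inv]
  have hlog4 : Real.log ((x + N)/N) = Real.log (x + N) - Real.log N :=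
    Real.log_div (by positivity) (by positivity)
  rw [hGSlog, Finset.sum_range_succ, hlog4, Finset.sum_add_distrib, Finset.sum_sub_distrib,
    hsum1, hsum2, hsum3]
  ring

open HurwitzZeta in
lemma deriv_hurwitzZeta_eq (x : ℝ) (hx0 : 0 < x) (hx1 : x ≤ 1) :
    deriv (fun s : ℂ => hurwitzZeta (x : ℝ) s) 0
      = (Real.log (Real.Gamma x) : ℂ) + deriv riemannZeta 0 := by
  have hfd : ∀ n : ℕ, DifferentiableOn ℂ (fterm x n) Uset :=
    fun n => (fterm_differentiable x hx0 n).differentiableOn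
  have hsum := summable_bound x
  have hbd : ∀ (n : ℕ) (w : ℂ), w ∈ Uset →
      ‖fterm x n w‖ ≤ Cbound x * ((n:ℝ)+1) ^ (-(3/2) : ℝ) :=
    fun n w hw => fterm_bound x hx0 hx1 n w hw
  set T : ℂ → ℂ := fun w => ∑' n, fterm x n w with hT
  have hTd : DifferentiableOn ℂ T Uset :=
    differentiableOn_tsum_of_summable_norm hsum hfd Uset_open hbd
  have hds : HasSum (fun n => deriv (fterm x n) 0) (deriv T 0) :=
    hasSum_deriv_of_summable_norm hsum hfd Uset_open hbd zero_mem_Uset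
  set Φ : ℂ → ℂ := fun s => (hurwitzZeta (x:ℝ) s - riemannZeta s) + ((x:ℂ)-1) * qz s with hΦ
  have hsub : Differentiable ℂ (fun s : ℂ => hurwitzZeta (x:ℝ) s - riemannZeta s) := by
    have := differentiable_hurwitzZeta_sub_hurwitzZeta ((x:ℝ) : UnitAddCircle) 0
    simpa [HurwitzZeta.hurwitzZeta_zero] using this
  have hΦd : DifferentiableOn ℂ Φ Uset :=
    fun s _ => ((hsub s).add ((differentiableAt_qz s).const_mul _)).differentiableWithinAt
  have hEq : Set.EqOn T Φ Uset := by
    apply AnalyticOnNhd.eqOn_of_preconnected_of_eventuallyEq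
      (hTd.analyticOnNhd Uset_open) (hΦd.analyticOnNhd Uset_open) Uset_preconnected
      two_mem_Uset
    filter_upwards [(isOpen_lt continuous_const Complex.continuous_re).mem_nhds
      (show (1:ℝ) < (2:ℂ).re by norm_num)] with s hs
    exact (hasSum_fterm x hx0 hx1 hs).tsum_eq
  have hTΦ : deriv T 0 = deriv Φ 0 := by
    apply Filter.EventuallyEq.deriv_eq
    filter_upwards [Uset_open.mem_nhds zero_mem_Uset] with s hs
    exact hEq hs
  have h01 : (0:ℂ) ≠ 1 := by norm_num
  have hΦhd : HasDerivAt Φ (deriv (hurwitzZeta ((x:ℝ) : UnitAddCircle)) 0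
      - deriv riemannZeta 0 + ((x:ℂ)-1) * ((γ : ℝ) : ℂ)) 0 :=
    (((differentiableAt_hurwitzZeta _ h01).hasDerivAt).sub
      ((differentiableAt_riemannZeta h01).hasDerivAt)).add
      (hasDerivAt_qz.const_mul ((x:ℂ)-1))
  have hpartial : Tendsto (fun N => ∑ n ∈ range N, deriv (fterm x n) 0) atTop
      (𝓝 (deriv T 0)) := hds.tendsto_sum_nat
  have hderiv_eq : ∀ n : ℕ, deriv (fterm x n) 0
      = ((Real.log ((n:ℝ)+1) - Real.log ((n:ℝ)+x) + (x-1)/((n:ℝ)+1) : ℝ) : ℂ) :=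
    fun n => (hasDerivAt_fterm x hx0 n).deriv
  have hcast : Tendsto (fun N => ∑ n ∈ range N, deriv (fterm x n) 0) atTop
      (𝓝 ((Real.log (Real.Gamma x) + (x-1)*γ : ℝ) : ℂ)) := by
    have h0 := (Complex.continuous_ofReal.tendsto _).comp (real_partial_tendsto x hx0 hx1)
    apply h0.congr
    intro N
    simp only [Function.comp_apply, hderiv_eq]
    push_cast
    rfl
  have hT0 : deriv T 0 = ((Real.log (Real.Gamma x) + (x-1)*γ : ℝ) : ℂ) :=
    tendsto_nhds_unique hpartial hcast
  rw [hTΦ, hΦhd.deriv] at hT0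
  have : deriv (fun s : ℂ => hurwitzZeta (x:ℝ) s) 0
      = deriv (hurwitzZeta ((x:ℝ) : UnitAddCircle)) 0 := rfl
  rw [this]
  push_cast at hT0 ⊢
  linear_combination hT0

end LerchAux
end

open HurwitzZeta

theorem lerch_identity (x : ℝ) (hx0 : 0 < x) (hx1 : x ≤ 1) :
    deriv (fun s => hurwitzZeta (x : UnitAddCircle) s) 0 =
      (Real.log (Real.Gamma x) : ℂ) - (1/2 : ℂ) * (Real.log (2 * Real.pi) : ℂ) := by
  rw [LerchAux.deriv_hurwitzZeta_eq x hx0 hx1, LerchAux.hasDerivAt_riemannZeta_zero.deriv]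
  ring
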